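/- Let O be a graded valuation ring (for a commutative grading group G) and M a graded O-module that is torsion-free in the graded sense, meaning that for each nonzero homogeneous a ∈ O, multiplication by a is injective on M. Then M is a flat O-module, and if moreover M is finitely generated then M is free with a homogeneous basis. -/

import Mathlib

universe u v

/-- A `G`-graded commutative ring structure on `A`: graded pieces `deg g`,
multiplicativity of the grading, and an internal direct sum decomposition
recorded by the homogeneous-component function `comp`. -/
structure GradedStr (G : Type u) [CommGroup G] (A : Type v) [CommRing A] where
  deg : G → AddSubgroup A
  one_mem : (1 : A) ∈ deg 1
  mul_mem : ∀ {g h : G} {a b : A}, a ∈ deg g → b ∈ deg h → a * b ∈ deg (g * h)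
  comp : A → G → A
  comp_mem : ∀ a g, comp a g ∈ deg g
  comp_add : ∀ a b g, comp (a + b) g = comp a g + comp b g
  comp_of_mem : ∀ {a : A} {g : G}, a ∈ deg g → comp a g = a
  comp_of_mem_ne : ∀ {a : A} {g g' : G}, a ∈ deg g → g' ≠ g → comp a g' = 0
  finite_support : ∀ a : A, (Function.support (comp a)).Finite
  sum_comp : ∀ a : A, ∑ᶠ g, comp a g = a

namespace GradedStr

variable {G : Type u} [CommGroup G] {A : Type v} [CommRing A]

/-- `a` is homogeneous: it lies in some graded piece. -/
def IsHomog (𝒜 : GradedStr G A) (a : A) : Prop := ∃ g, a ∈ 𝒜.deg g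

/-- A `G`-graded field: a nonzero graded ring in which every nonzero homogeneous
element is invertible. -/
def IsGradedField (𝒜 : GradedStr G A) : Prop :=
  Nontrivial A ∧ ∀ a : A, 𝒜.IsHomog a → a ≠ 0 → IsUnit a

/-- A graded subring: a subring stable under taking homogeneous components. -/
def IsGradedSubring (𝒜 : GradedStr G A) (S : Subring A) : Prop :=
  ∀ x ∈ S, ∀ g, 𝒜.comp x g ∈ S

/-- A graded subfield of a graded field: a graded subring containing the inverses of
its nonzero homogeneous elements. -/
def IsGradedSubfield (𝒜 : GradedStr G A) (S : Subring A) : Prop :=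
  𝒜.IsGradedSubring S ∧ ∀ x ∈ S, 𝒜.IsHomog x → x ≠ 0 → Ring.inverse x ∈ S

/-- The additive subgroup of homogeneous polynomials of grading `h` in `K[g₀⁻¹ T]`,
the polynomial ring in which `T` is declared homogeneous of grading `g₀`: the
coefficient of `T^n` must be homogeneous of grading `h * g₀⁻ⁿ`. -/
def polyDeg (𝒜 : GradedStr G A) (g₀ h : G) : AddSubgroup (Polynomial A) where
  carrier := {p | ∀ n : ℕ, p.coeff n ∈ 𝒜.deg (h * (g₀ ^ n)⁻¹)}
  zero_mem' := by intro n; simpa using (𝒜.deg (h * (g₀ ^ n)⁻¹)).zero_mem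
  add_mem' := by
    intro p q hp hq n
    rw [Polynomial.coeff_add]
    exact (𝒜.deg _).add_mem (hp n) (hq n)
  neg_mem' := by
    intro p hp n
    rw [Polynomial.coeff_neg]
    exact (𝒜.deg _).neg_mem (hp n)

/-- A homogeneous polynomial in `K[g₀⁻¹T]`. -/
def IsHomogPoly (𝒜 : GradedStr G A) (g₀ : G) (p : Polynomial A) : Prop :=
  ∃ h, p ∈ 𝒜.polyDeg g₀ h

/-- The graded fraction field of a graded subring of a graded field, computed inside
the ambient graded field: the subring generated by `S` together with the inverses of
the nonzero homogeneous elements of `S`. -/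
def fracIn (𝒜 : GradedStr G A) (S : Subring A) : Subring A :=
  Subring.closure (↑S ∪ {y : A | ∃ x ∈ S, x ≠ 0 ∧ 𝒜.IsHomog x ∧ y = Ring.inverse x})

end GradedStr

/-- `x` is integral over the subring `S` (satisfies a monic polynomial equation with
coefficients in `S`). -/
def IntegralOver {A : Type v} [CommRing A] (S : Subring A) (x : A) : Prop :=
  ∃ p : Polynomial A, p.Monic ∧ (∀ n, p.coeff n ∈ S) ∧ Polynomial.eval x p = 0

/-- Algebraic independence of a family of elements over a subring: the evaluation map
from the (multivariate) polynomial ring is injective.  (For homogeneous elements this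
is graded algebraic independence, the grading playing no role in injectivity.) -/
def AlgIndepOver {A : Type v} [CommRing A] {ι : Type*} (S : Subring A) (T : ι → A) : Prop :=
  Function.Injective (MvPolynomial.eval₂Hom S.subtype T)

/-- A graded valuation ring of the graded subfield `F` of the ambient graded field:
a graded subring `O ⊆ F` such that every nonzero homogeneous element `f` of `F`
satisfies `f ∈ O` or `f⁻¹ ∈ O`. -/
def IsGVRofSubfield {G : Type u} [CommGroup G] {A : Type v} [CommRing A]
    (𝒜 : GradedStr G A) (F : Subring A) (O : Subring A) : Prop :=
  O ≤ F ∧ 𝒜.IsGradedSubring O ∧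
    ∀ f ∈ F, f ≠ 0 → 𝒜.IsHomog f → f ∈ O ∨ Ring.inverse f ∈ O

/-- A `G`-graded module structure over a `G`-graded ring: graded pieces, compatibility
of scalar multiplication with the gradings, and an internal direct sum decomposition
recorded by the homogeneous-component function. -/
structure GradedModStr {G : Type u} [CommGroup G] {O : Type v} [CommRing O]
    (𝒪 : GradedStr G O) (M : Type v) [AddCommGroup M] [Module O M] where
  deg : G → AddSubgroup M
  smul_mem : ∀ {g h : G} {a : O} {m : M}, a ∈ 𝒪.deg g → m ∈ deg h → a • m ∈ deg (g * h)
  comp : M → G → M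
  comp_mem : ∀ m g, comp m g ∈ deg g
  comp_add : ∀ m m' g, comp (m + m') g = comp m g + comp m' g
  comp_of_mem : ∀ {m : M} {g : G}, m ∈ deg g → comp m g = m
  comp_of_mem_ne : ∀ {m : M} {g g' : G}, m ∈ deg g → g' ≠ g → comp m g' = 0
  finite_support : ∀ m : M, (Function.support (comp m)).Finite
  sum_comp : ∀ m : M, ∑ᶠ g, comp m g = m

section Aux


variable {G : Type u} [CommGroup G] {O : Type v} [CommRing O] {𝒪 : GradedStr G O}
  {M : Type v} [AddCommGroup M] [Module O M] (ℳ : GradedModStr 𝒪 M)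

private lemma mcomp_zero (g : G) : ℳ.comp 0 g = 0 := by
  have h2 : ℳ.comp 0 g = ℳ.comp 0 g + ℳ.comp 0 g := by
    simpa using (ℳ.comp_add 0 0 g).symm
  exact (left_eq_add.mp h2)

/-- Taking the degree-`h` component of `M`, as an additive hom. -/
private def mcompHom (h : G) : M →+ M where
  toFun x := ℳ.comp x h
  map_zero' := mcomp_zero ℳ h
  map_add' x y := ℳ.comp_add x y h

private lemma mcomp_smul {a : O} {m : M} {g : G} (hm : m ∈ ℳ.deg g) (h : G) :
    ℳ.comp (a • m) h = 𝒪.comp a (h * g⁻¹) • m := by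
  have h1 : a • m = ∑ᶠ g', 𝒪.comp a g' • m := by
    conv_lhs => rw [← 𝒪.sum_comp a]
    exact finsum_smul' (𝒪.finite_support a) m
  have hsupp : (Function.support fun g' => 𝒪.comp a g' • m).Finite :=
    (𝒪.finite_support a).subset (by
      intro g' hg'
      simp only [Function.mem_support] at hg' ⊢
      intro hz
      exact hg' (by rw [hz, zero_smul]))
  have h2 : ℳ.comp (a • m) h = ∑ᶠ g', ℳ.comp (𝒪.comp a g' • m) h := by
    rw [h1]
    exact (mcompHom ℳ h).map_finsum hsupp
  rw [h2]
  rw [finsum_eq_single _ (h * g⁻¹) ?_]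
  · apply ℳ.comp_of_mem
    have := ℳ.smul_mem (𝒪.comp_mem a (h * g⁻¹)) hm
    rwa [inv_mul_cancel_right] at this
  · intro x hx
    apply ℳ.comp_of_mem_ne (ℳ.smul_mem (𝒪.comp_mem a x) hm)
    intro hc
    exact hx (by rw [hc, mul_inv_cancel_right])

private lemma exists_min_dvd {ι : Type*}
    (hval : ∀ a b : O, 𝒪.IsHomog a → 𝒪.IsHomog b → a ≠ 0 → b ≠ 0 → a ∣ b ∨ b ∣ a)
    (c : ι → O) (hom : ∀ i, 𝒪.IsHomog (c i)) (s : Finset ι) :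
    s.Nonempty → (∀ i ∈ s, c i ≠ 0) → ∃ j ∈ s, ∀ i ∈ s, c j ∣ c i := by
  classical
  induction s using Finset.induction_on with
  | empty => intro h; simp at h
  | insert a t ha ih =>
    intro _ hne0
    rcases t.eq_empty_or_nonempty with rfl | hte
    · exact ⟨a, by simp, by simp⟩
    · obtain ⟨j, hjt, hjd⟩ := ih hte (fun i hi => hne0 i (Finset.mem_insert_of_mem hi))
      rcases hval (c a) (c j) (hom a) (hom j) (hne0 a (Finset.mem_insert_self a t))
          (hne0 j (Finset.mem_insert_of_mem hjt)) with hd | hd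
      · refine ⟨a, Finset.mem_insert_self a t, fun i hi => ?_⟩
        rcases Finset.mem_insert.mp hi with rfl | hi
        · exact dvd_rfl
        · exact hd.trans (hjd i hi)
      · refine ⟨j, Finset.mem_insert_of_mem hjt, fun i hi => ?_⟩
        rcases Finset.mem_insert.mp hi with rfl | hi
        · exact hd
        · exact hjd i hi

end Aux

section Red

variable {G : Type u} [CommGroup G] {O : Type v} [CommRing O] {𝒪 : GradedStr G O}
  {M : Type v} [AddCommGroup M] [Module O M] (ℳ : GradedModStr 𝒪 M)

private lemma reduce
    (hval : ∀ a b : O, 𝒪.IsHomog a → 𝒪.IsHomog b → a ≠ 0 → b ≠ 0 → a ∣ b ∨ b ∣ a)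
    (htf : ∀ a : O, 𝒪.IsHomog a → a ≠ 0 → Function.Injective (fun m : M => a • m)) :
    ∀ (n : ℕ) (m : Fin n → M), (∀ i, ∃ g, m i ∈ ℳ.deg g) →
    ∃ (k : ℕ) (b : Fin k → M), (∀ i, ∃ g, b i ∈ ℳ.deg g) ∧ LinearIndependent O b ∧
      Submodule.span O (Set.range b) = Submodule.span O (Set.range m) := by
  intro n
  induction n using Nat.strong_induction_on with
  | _ n ih =>
  intro m hm
  by_cases hli : LinearIndependent O m
  · exact ⟨n, m, hm, hli, rfl⟩
  choose gv hgv using hm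
  obtain ⟨l, hsum, j, hj⟩ := Fintype.not_linearIndependent_iff.mp hli
  -- choose a degree h at which the relation has nonzero component at index j
  have hg' : ∃ g', 𝒪.comp (l j) g' ≠ 0 := by
    by_contra hcon
    push_neg at hcon
    apply hj
    rw [← 𝒪.sum_comp (l j)]
    simp [hcon]
  obtain ⟨g', hg'⟩ := hg'
  set h : G := g' * gv j with hh
  set c : Fin n → O := fun i => 𝒪.comp (l i) (h * (gv i)⁻¹) with hcdef
  have hcj : c j ≠ 0 := by
    simpa [hcdef, hh, mul_inv_cancel_right] using hg'
  have hchom : ∀ i, 𝒪.IsHomog (c i) := fun i => ⟨_, 𝒪.comp_mem _ _⟩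
  have hc : ∑ i, c i • m i = 0 := by
    have h0 : (mcompHom ℳ h) (∑ i, l i • m i) = 0 := by rw [hsum]; exact map_zero _
    rw [map_sum] at h0
    calc ∑ i, c i • m i
        = ∑ i, (mcompHom ℳ h) (l i • m i) :=
          Finset.sum_congr rfl (fun i _ => (mcomp_smul ℳ (hgv i) h).symm)
      _ = 0 := h0
  -- find an index whose coefficient divides all others
  classical
  obtain ⟨j₀, hj₀mem, hj₀dvd⟩ := exists_min_dvd hval c hchom
    (Finset.univ.filter (fun i => c i ≠ 0)) ⟨j, by simpa using hcj⟩
    (fun i hi => (Finset.mem_filter.mp hi).2)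
  have hj₀ne : c j₀ ≠ 0 := (Finset.mem_filter.mp hj₀mem).2
  have hdvd : ∀ i, c j₀ ∣ c i := by
    intro i
    by_cases hz : c i = 0
    · rw [hz]; exact dvd_zero _
    · exact hj₀dvd i (Finset.mem_filter.mpr ⟨Finset.mem_univ i, hz⟩)
  set e : Fin n → O := fun i => if i = j₀ then 1 else (hdvd i).choose with hedef
  have hce : ∀ i, c i = c j₀ * e i := by
    intro i
    by_cases hij : i = j₀
    · subst hij; simp [hedef]
    · simpa [hedef, hij] using (hdvd i).choose_spec
  have hsum2 : (fun m : M => c j₀ • m) (∑ i, e i • m i) = (fun m : M => c j₀ • m) 0 := by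
    simp only [smul_zero]
    rw [Finset.smul_sum]
    calc ∑ i, c j₀ • e i • m i = ∑ i, c i • m i := by
          refine Finset.sum_congr rfl (fun i _ => ?_)
          rw [smul_smul, ← hce]
      _ = 0 := hc
  have hesum : ∑ i, e i • m i = 0 := htf (c j₀) (hchom j₀) hj₀ne hsum2
  have hmj : m j₀ = -∑ i ∈ Finset.univ.erase j₀, e i • m i := by
    have := Finset.add_sum_erase Finset.univ (fun i => e i • m i) (Finset.mem_univ j₀)
    rw [hesum] at this
    have hej : e j₀ = 1 := by simp [hedef]
    simp only [hej, one_smul] at this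
    exact eq_neg_of_add_eq_zero_left this
  have hn : n ≠ 0 := fun hn0 => by subst hn0; exact j₀.elim0
  obtain ⟨n', rfl⟩ : ∃ n', n = n' + 1 := ⟨n - 1, by omega⟩
  set m' : Fin n' → M := fun i => m (j₀.succAbove i) with hm'def
  obtain ⟨k, b, hb, hbli, hbspan⟩ := ih n' (by omega) m' (fun i => ⟨gv _, hgv _⟩)
  refine ⟨k, b, hb, hbli, ?_⟩
  rw [hbspan]
  apply le_antisymm
  · apply Submodule.span_mono
    rintro _ ⟨i, rfl⟩
    exact ⟨j₀.succAbove i, rfl⟩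
  · rw [Submodule.span_le]
    rintro _ ⟨i, rfl⟩
    by_cases hij : i = j₀
    · subst hij
      rw [hmj]
      refine neg_mem (Submodule.sum_mem _ ?_)
      intro i hi
      obtain ⟨z, hz⟩ := Fin.exists_succAbove_eq (Finset.ne_of_mem_erase hi)
      exact Submodule.smul_mem _ _ (Submodule.subset_span ⟨z, by rw [hm'def]; simp [hz]⟩)
    · obtain ⟨z, hz⟩ := Fin.exists_succAbove_eq hij
      exact Submodule.subset_span ⟨z, by rw [hm'def]; simp [hz]⟩

end Red

section Red2

variable {G : Type u} [CommGroup G] {O : Type v} [CommRing O] {𝒪 : GradedStr G O}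
  {M : Type v} [AddCommGroup M] [Module O M] (ℳ : GradedModStr 𝒪 M)

private lemma reduce_set
    (hval : ∀ a b : O, 𝒪.IsHomog a → 𝒪.IsHomog b → a ≠ 0 → b ≠ 0 → a ∣ b ∨ b ∣ a)
    (htf : ∀ a : O, 𝒪.IsHomog a → a ≠ 0 → Function.Injective (fun m : M => a • m))
    (T : Set M) (hT : T.Finite) (hhom : ∀ x ∈ T, ∃ g, x ∈ ℳ.deg g) :
    ∃ (k : ℕ) (b : Fin k → M), (∀ i, ∃ g, b i ∈ ℳ.deg g) ∧ LinearIndependent O b ∧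
      Submodule.span O (Set.range b) = Submodule.span O T := by
  have : Fintype T := hT.fintype
  let e := Fintype.equivFin T
  let m : Fin (Fintype.card T) → M := fun i => (e.symm i : M)
  have hrange : Set.range m = T := by
    ext x
    constructor
    · rintro ⟨i, rfl⟩; exact (e.symm i).2
    · intro hx; exact ⟨e ⟨x, hx⟩, by simp [m]⟩
  obtain ⟨k, b, h1, h2, h3⟩ := reduce ℳ hval htf _ m
    (fun i => hhom _ (by rw [← hrange]; exact ⟨i, rfl⟩))
  exact ⟨k, b, h1, h2, by rw [h3, hrange]⟩

private lemma self_mem_span (x : M) :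
    x ∈ Submodule.span O (ℳ.comp x '' Function.support (ℳ.comp x)) := by
  have h1 : (∑ᶠ g, ℳ.comp x g) ∈
      Submodule.span O (ℳ.comp x '' Function.support (ℳ.comp x)) := by
    rw [finsum_eq_sum _ (ℳ.finite_support x)]
    exact Submodule.sum_mem _ (fun g hg =>
      Submodule.subset_span ⟨g, (ℳ.finite_support x).mem_toFinset.mp hg, rfl⟩)
  rwa [ℳ.sum_comp x] at h1

end Red2

section Main

open scoped TensorProduct

variable {G : Type u} [CommGroup G] {O : Type v} [CommRing O] {𝒪 : GradedStr G O}
  {M : Type v} [AddCommGroup M] [Module O M] (ℳ : GradedModStr 𝒪 M)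

theorem graded_torsionfree_flat_and_free'
    (hval : ∀ a b : O, 𝒪.IsHomog a → 𝒪.IsHomog b → a ≠ 0 → b ≠ 0 → a ∣ b ∨ b ∣ a)
    (htf : ∀ a : O, 𝒪.IsHomog a → a ≠ 0 →
      Function.Injective (fun m : M => a • m)) :
    Module.Flat O M ∧
      (Module.Finite O M →
        ∃ (n : ℕ) (b : Module.Basis (Fin n) O M), ∀ i, ∃ g, b i ∈ ℳ.deg g) := by
  classical
  constructor
  · -- flatness
    refine (Module.Flat.iff_rTensor_injective' (R := O) (M := M)).mpr ?_
    intro I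
    rw [injective_iff_map_eq_zero]
    intro x hx
    obtain ⟨S, rfl⟩ := TensorProduct.exists_finset x
    set T : Set M := ⋃ p ∈ (S : Set (↥I × M)), (ℳ.comp p.2 '' Function.support (ℳ.comp p.2))
      with hTdef
    have hTfin : T.Finite :=
      Set.Finite.biUnion S.finite_toSet (fun p _ => ((ℳ.finite_support p.2).image _))
    have hThom : ∀ x ∈ T, ∃ g, x ∈ ℳ.deg g := by
      intro y hy
      rw [hTdef] at hy
      simp only [Set.mem_iUnion, Set.mem_image] at hy
      obtain ⟨p, _, g, _, rfl⟩ := hy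
      exact ⟨g, ℳ.comp_mem _ _⟩
    set N : Submodule O M := Submodule.span O T with hNdef
    have hmem : ∀ p ∈ S, p.2 ∈ N := by
      intro p hp
      refine Submodule.span_mono ?_ (self_mem_span ℳ p.2)
      exact Set.subset_biUnion_of_mem
        (u := fun p : ↥I × M => ℳ.comp p.2 '' Function.support (ℳ.comp p.2))
        (show p ∈ (S : Set (↥I × M)) from hp)
    -- N is free
    obtain ⟨k, b, hbhom, hbli, hbspan⟩ := reduce_set ℳ hval htf T hTfin hThom
    have hNfree : Module.Free O ↥N := by
      have hNB : N = Submodule.span O (Set.range b) := hbspan.symm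
      rw [hNB]
      exact Module.Free.of_basis (Module.Basis.span hbli)
    have hNflat : Module.Flat O ↥N := Module.Flat.of_free (R := O) (M := ↥N)
    -- lift x to I ⊗ N
    set x' : ↥I ⊗[O] ↥N :=
      ∑ p ∈ S.attach, p.1.1 ⊗ₜ[O] (⟨p.1.2, hmem p.1 p.2⟩ : ↥N) with hx'def
    have h1 : (N.subtype.lTensor ↥I) x' = ∑ p ∈ S, p.1 ⊗ₜ[O] p.2 := by
      rw [hx'def, map_sum]
      rw [← Finset.sum_attach S (fun p => p.1 ⊗ₜ[O] p.2)]
      exact Finset.sum_congr rfl (fun p _ => by simp)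
    have h2 : (N.subtype.lTensor O) ((I.subtype.rTensor ↥N) x') =
        (I.subtype.rTensor M) (∑ p ∈ S, p.1 ⊗ₜ[O] p.2) := by
      rw [← h1, hx'def]
      simp [map_sum]
    have hinj : Function.Injective (N.subtype.lTensor O) :=
      Module.Flat.lTensor_preserves_injective_linearMap (M := O) N.subtype N.injective_subtype
    have h3 : (I.subtype.rTensor ↥N) x' = 0 := by
      apply hinj
      rw [map_zero, h2]
      exact hx
    have h4 : x' = 0 := by
      have hNinj := (Module.Flat.iff_rTensor_injective' (R := O) (M := ↥N)).mp hNflat I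
      apply hNinj
      rw [h3, map_zero]
    rw [← h1, h4, map_zero]
  · -- freeness in the finitely generated case
    intro hfin
    obtain ⟨s, hs⟩ := Module.Finite.fg_top (R := O) (M := M)
    set T : Set M := ⋃ x ∈ (s : Set M), (ℳ.comp x '' Function.support (ℳ.comp x)) with hTdef
    have hTfin : T.Finite :=
      Set.Finite.biUnion s.finite_toSet (fun x _ => ((ℳ.finite_support x).image _))
    have hThom : ∀ x ∈ T, ∃ g, x ∈ ℳ.deg g := by
      intro y hy
      rw [hTdef] at hy
      simp only [Set.mem_iUnion, Set.mem_image] at hy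
      obtain ⟨p, _, g, _, rfl⟩ := hy
      exact ⟨g, ℳ.comp_mem _ _⟩
    have hTtop : Submodule.span O T = ⊤ := by
      rw [← top_le_iff, ← hs, Submodule.span_le]
      intro x hx
      refine Submodule.span_mono ?_ (self_mem_span ℳ x)
      exact Set.subset_biUnion_of_mem
        (u := fun x : M => ℳ.comp x '' Function.support (ℳ.comp x)) hx
    obtain ⟨k, b, hbhom, hbli, hbspan⟩ := reduce_set ℳ hval htf T hTfin hThom
    refine ⟨k, Module.Basis.mk hbli ?_, ?_⟩
    · rw [hbspan, hTtop]
    · intro i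
      rw [Module.Basis.coe_mk]
      exact hbhom i
end Main

/-- Let `O` be a graded valuation ring (a graded domain in which, of
any two nonzero homogeneous elements, one divides the other -- equivalently, for every
nonzero homogeneous `f` of `Frac_G(O)`, `f ∈ O` or `f⁻¹ ∈ O`), and let `M` be a graded
`O`-module that is torsion-free in the graded sense.  Then `M` is flat over `O`, and
if `M` is finitely generated it is free with a homogeneous basis. -/
theorem graded_torsionfree_flat_and_free
    {G : Type u} [CommGroup G] {O : Type v} [CommRing O]
    (𝒪 : GradedStr G O)
    (hdom : Nontrivial O ∧
      ∀ a : O, 𝒪.IsHomog a → a ≠ 0 → ∀ b : O, a * b = 0 → b = 0)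
    (hval : ∀ a b : O, 𝒪.IsHomog a → 𝒪.IsHomog b → a ≠ 0 → b ≠ 0 → a ∣ b ∨ b ∣ a)
    {M : Type v} [AddCommGroup M] [Module O M] (ℳ : GradedModStr 𝒪 M)
    (htf : ∀ a : O, 𝒪.IsHomog a → a ≠ 0 →
      Function.Injective (fun m : M => a • m)) :
    Module.Flat O M ∧
      (Module.Finite O M →
        ∃ (n : ℕ) (b : Module.Basis (Fin n) O M), ∀ i, ∃ g, b i ∈ ℳ.deg g) := by
  exact graded_torsionfree_flat_and_free' ℳ hval htf
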